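/- Let H be a real Hilbert space, let {C_i}_{i=1}^m be a finite family of nonempty, closed and convex subsets of H such that int ∩_{i=1}^m C_i ≠ ∅, let r > 1 and M be positive integers, let f : ℕ → {1,…,m} be surjective, let S_n be the associated unrestricted r-set DR operators, let j_f ∈ ℕ satisfy f({1,…,j_f}) = {1,…,m}, and let Q := S_{j_f}∘⋯∘S_0. Let {T_j}_{j=1}^k be a family of strongly nonexpansive operators on H with a common fixed point, let h : ℕ → {1,…,k} be an M-quasi-periodic surjection, and let P_n := T_{h(n)}∘⋯∘T_{h(0)}. If Q is an element of {T_j}_{j=1}^k, then for every x ∈ H the sequence (P_n x) converges weakly to a point x_* ∈ ∩_{i=1}^m C_i. -/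

import Mathlib

open Filter Topology RealInnerProductSpace

variable {H : Type*} [NormedAddCommGroup H] [InnerProductSpace ℝ H] [CompleteSpace H]

/-- Weak convergence in a Hilbert space: `x n ⇀ p`. -/
def WeakConvergesTo (x : ℕ → H) (p : H) : Prop :=
  ∀ y : H, Tendsto (fun n => ⟪x n, y⟫) atTop (𝓝 ⟪p, y⟫)

/-- `compSeq n g = g (n-1) ∘ ⋯ ∘ g 0` (the identity when `n = 0`). -/
def compSeq {α : Type*} : ℕ → (ℕ → α → α) → (α → α)
  | 0, _ => id
  | n + 1, g => g n ∘ compSeq n g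

/-- `P` is the metric projection onto `C`. -/
def IsProjOn (C : Set H) (P : H → H) : Prop :=
  ∀ x, P x ∈ C ∧ ∀ y ∈ C, ‖x - P x‖ ≤ ‖x - y‖

/-- Nonexpansive operator. -/
def Nonexpansive (T : H → H) : Prop := ∀ x y, ‖T x - T y‖ ≤ ‖x - y‖

/-- Condition (S). -/
def CondS (T : H → H) : Prop :=
  ∀ x y : ℕ → H, (∃ c, ∀ n, ‖x n - y n‖ ≤ c) →
    Tendsto (fun n => ‖x n - y n‖ - ‖T (x n) - T (y n)‖) atTop (𝓝 0) →
    Tendsto (fun n => x n - y n - (T (x n) - T (y n))) atTop (𝓝 (0 : H))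

/-- Strongly nonexpansive operator. -/
def StronglyNonexpansive (T : H → H) : Prop := Nonexpansive T ∧ CondS T

/-- Firmly nonexpansive operator. -/
def FirmlyNonexpansive (T : H → H) : Prop :=
  ∀ x y, ‖T x - T y‖ ^ 2 ≤ ⟪T x - T y, x - y⟫

/-- Averaged operator. -/
def Averaged (T : H → H) : Prop :=
  ∃ lam ∈ Set.Ioo (0 : ℝ) 1, ∃ U : H → H, Nonexpansive U ∧
    T = fun x => (1 - lam) • x + lam • U x

/-- The unrestricted `r`-set Douglas–Rachford operators `S n` associated with projections
`proj i` onto the sets `C i`, indices chosen by `f`: `S n = 2⁻¹ (Id + R_{C_{f((r-1)n+r-1)}} ∘ ⋯ ∘ R_{C_{f((r-1)n)}})`. -/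
noncomputable def drS (proj : ℕ → H → H) (r : ℕ) (f : ℕ → ℕ) (n : ℕ) : H → H :=
  fun x => (2⁻¹ : ℝ) • (x + compSeq r (fun j y => (2 : ℝ) • proj (f ((r - 1) * n + j)) y - y) x)

set_option linter.unusedSectionVars false

section Stmt5Aux

lemma projOn_eq_self {C : Set H} {P : H → H} (hP : IsProjOn C P) {x : H} (hx : x ∈ C) :
    P x = x := by
  have h := (hP x).2 x hx
  simp only [sub_self, norm_zero] at h
  have := norm_le_zero_iff.mp h
  rw [sub_eq_zero] at this
  exact this.symm

lemma projOn_inner_le {C : Set H} {P : H → H} (hconv : Convex ℝ C) (hP : IsProjOn C P)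
    (x : H) {y : H} (hy : y ∈ C) : ⟪x - P x, y - P x⟫ ≤ 0 := by
  have key : ∀ t : ℝ, 0 < t → t ≤ 1 → 2 * ⟪x - P x, y - P x⟫ ≤ t * ‖y - P x‖ ^ 2 := by
    intro t ht ht1
    have hmem : P x + t • (y - P x) ∈ C := by
      have := hconv (hP x).1 hy (a := 1 - t) (b := t) (by linarith) ht.le (by ring)
      convert this using 1
      module
    have hle := (hP x).2 _ hmem
    have hsq : ‖x - P x‖ ^ 2 ≤ ‖(x - P x) - t • (y - P x)‖ ^ 2 := by
      have hexp : x - (P x + t • (y - P x)) = (x - P x) - t • (y - P x) := by abel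
      rw [← hexp]
      exact pow_le_pow_left₀ (norm_nonneg _) hle 2
    have hexpand : ‖(x - P x) - t • (y - P x)‖ ^ 2 =
        ‖x - P x‖ ^ 2 - 2 * (t * ⟪x - P x, y - P x⟫) + t ^ 2 * ‖y - P x‖ ^ 2 := by
      rw [norm_sub_sq_real, real_inner_smul_right, norm_smul, Real.norm_eq_abs, abs_of_pos ht]
      ring
    rw [hexpand] at hsq
    nlinarith
  have hseq : Tendsto (fun n : ℕ => (1 : ℝ) / (n + 1)) atTop (𝓝 0) :=
    tendsto_one_div_add_atTop_nhds_zero_nat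
  have hlim : Tendsto (fun n : ℕ => (1 : ℝ) / (n + 1) * ‖y - P x‖ ^ 2) atTop (𝓝 0) := by
    simpa using hseq.mul_const (‖y - P x‖ ^ 2)
  have hev : ∀ n : ℕ, 2 * ⟪x - P x, y - P x⟫ ≤ (1 : ℝ) / (n + 1) * ‖y - P x‖ ^ 2 := by
    intro n
    refine key _ (by positivity) ?_
    rw [div_le_one (by positivity)]
    linarith [Nat.cast_nonneg (α := ℝ) n]
  have := ge_of_tendsto hlim (Eventually.of_forall hev)
  linarith

lemma projOn_firm {C : Set H} {P : H → H} (hconv : Convex ℝ C) (hP : IsProjOn C P)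
    (x y : H) : ‖P x - P y‖ ^ 2 ≤ ⟪x - y, P x - P y⟫ := by
  have h1 := projOn_inner_le hconv hP x (hP y).1
  have h2 := projOn_inner_le hconv hP y (hP x).1
  have e : ⟪x - y, P x - P y⟫ - ‖P x - P y‖ ^ 2 =
      (-⟪x - P x, P y - P x⟫) + (-⟪y - P y, P x - P y⟫) := by
    rw [← real_inner_self_eq_norm_sq]
    simp only [inner_sub_left, inner_sub_right]
    linarith [real_inner_comm x (P x), real_inner_comm x (P y), real_inner_comm y (P x),
      real_inner_comm y (P y), real_inner_comm (P x) (P y), real_inner_comm x y]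
  linarith

lemma refl_nonexpansive {C : Set H} {P : H → H} (hconv : Convex ℝ C) (hP : IsProjOn C P) :
    Nonexpansive (fun y => (2 : ℝ) • P y - y) := by
  intro a b
  have hfirm := projOn_firm hconv hP a b
  have hexp : ((2 : ℝ) • P a - a) - ((2 : ℝ) • P b - b) = (2 : ℝ) • (P a - P b) - (a - b) := by
    module
  have hsq : ‖((2 : ℝ) • P a - a) - ((2 : ℝ) • P b - b)‖ ^ 2 ≤ ‖a - b‖ ^ 2 := by
    rw [hexp, norm_sub_sq_real, real_inner_smul_left, norm_smul]
    simp only [Real.norm_ofNat]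
    nlinarith [real_inner_comm (P a - P b) (a - b)]
  exact le_of_pow_le_pow_left₀ two_ne_zero (norm_nonneg _) hsq

lemma refl_fix {C : Set H} {P : H → H} (hP : IsProjOn C P) {w : H} (hw : w ∈ C) :
    (2 : ℝ) • P w - w = w := by
  rw [projOn_eq_self hP hw, two_smul]; abel

lemma eq_of_dist_eq_ball {z : H} {ε : ℝ} (hε : 0 < ε) {y : H} (g : H → H)
    (hd : ∀ w ∈ Metric.ball z ε, ‖g y - w‖ = ‖y - w‖) : g y = y := by
  set d := g y - y with hdd
  have hgy : g y = y + d := by rw [hdd]; abel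
  have key : ∀ w ∈ Metric.ball z ε, 2 * ⟪d, y - w⟫ + ‖d‖ ^ 2 = 0 := by
    intro w hw
    have h1 : ‖y + d - w‖ ^ 2 = ‖y - w‖ ^ 2 := by rw [← hgy, hd w hw]
    have h2 : y + d - w = (y - w) + d := by abel
    rw [h2, norm_add_sq_real] at h1
    have := real_inner_comm d (y - w)
    linarith
  by_contra hd0
  have hdnorm : 0 < ‖d‖ := norm_pos_iff.mpr (sub_ne_zero.mpr hd0)
  set t : ℝ := ε / (2 * ‖d‖) with htdef
  have ht : 0 < t := by positivity
  have hw2 : z - t • d ∈ Metric.ball z ε := by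
    rw [Metric.mem_ball, dist_eq_norm]
    have heq : z - t • d - z = -(t • d) := by abel
    rw [heq, norm_neg, norm_smul, Real.norm_eq_abs, abs_of_pos ht, htdef]
    calc ε / (2 * ‖d‖) * ‖d‖ = ε / 2 := by field_simp
    _ < ε := by linarith
  have h1 := key z (Metric.mem_ball_self hε)
  have h2 := key _ hw2
  have h3 : y - (z - t • d) = (y - z) + t • d := by abel
  rw [h3] at h2
  rw [inner_add_right, real_inner_smul_right, real_inner_self_eq_norm_sq] at h2
  have : t * ‖d‖ ^ 2 > 0 := by positivity
  have h4 : ⟪d, y - z⟫ = ⟪d, y - z⟫ := rfl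
  nlinarith [h1, h2]

lemma compSeq_succ_apply {α : Type*} (n : ℕ) (g : ℕ → α → α) (y : α) :
    compSeq (n + 1) g y = g n (compSeq n g y) := rfl

lemma compSeq_fix {g : ℕ → H → H} {n : ℕ} {w : H} (hfix : ∀ t < n, g t w = w) :
    compSeq n g w = w := by
  induction n with
  | zero => rfl
  | succ n ih =>
    rw [compSeq_succ_apply, ih (fun t ht => hfix t (ht.trans (Nat.lt_succ_self n)))]
    exact hfix n (Nat.lt_succ_self n)

lemma compSeq_nonexpansive {g : ℕ → H → H} {n : ℕ} (hg : ∀ t < n, Nonexpansive (g t)) :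
    Nonexpansive (compSeq n g) := by
  induction n with
  | zero => intro a b; simp [compSeq]
  | succ n ih =>
    intro a b
    calc ‖compSeq (n+1) g a - compSeq (n+1) g b‖
        ≤ ‖compSeq n g a - compSeq n g b‖ :=
          hg n (Nat.lt_succ_self n) _ _
      _ ≤ ‖a - b‖ := ih (fun t ht => hg t (ht.trans (Nat.lt_succ_self n))) a b

/-- Peeling: if a composition of nonexpansive maps, each fixing a ball, fixes `y`,
then every partial composition equals `y` and each factor fixes `y`. -/
lemma peel {z : H} {ε : ℝ} (hε : 0 < ε) (g : ℕ → H → H) (n : ℕ)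
    (hg : ∀ t < n, Nonexpansive (g t))
    (hfix : ∀ t < n, ∀ w ∈ Metric.ball z ε, g t w = w)
    {y : H} (hy : compSeq n g y = y) : ∀ t < n, g t y = y := by
  -- distances to ball points are preserved under partial compositions
  have mono : ∀ t ≤ n, ∀ w ∈ Metric.ball z ε, ‖compSeq t g y - w‖ ≤ ‖y - w‖ := by
    intro t ht w hw
    induction t with
    | zero => simp [compSeq]
    | succ t ih =>
      calc ‖compSeq (t+1) g y - w‖ = ‖g t (compSeq t g y) - g t w‖ := by
            rw [compSeq_succ_apply, hfix t (lt_of_lt_of_le (Nat.lt_succ_self t) ht) w hw]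
        _ ≤ ‖compSeq t g y - w‖ := hg t (lt_of_lt_of_le (Nat.lt_succ_self t) ht) _ _
        _ ≤ ‖y - w‖ := ih (le_trans (Nat.le_succ t) ht)
  have mono2 : ∀ s t, t ≤ s → s ≤ n → ∀ w ∈ Metric.ball z ε,
      ‖compSeq s g y - w‖ ≤ ‖compSeq t g y - w‖ := by
    intro s t hts hsn w hw
    induction s with
    | zero => rw [Nat.le_zero.mp hts]
    | succ s ih =>
      rcases Nat.eq_or_lt_of_le hts with rfl | hlt
      · exact le_rfl
      · calc ‖compSeq (s+1) g y - w‖ = ‖g s (compSeq s g y) - g s w‖ := by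
              rw [compSeq_succ_apply, hfix s (lt_of_lt_of_le (Nat.lt_succ_self s) hsn) w hw]
          _ ≤ ‖compSeq s g y - w‖ := hg s (lt_of_lt_of_le (Nat.lt_succ_self s) hsn) _ _
          _ ≤ ‖compSeq t g y - w‖ :=
              ih (Nat.lt_succ_iff.mp hlt) (le_trans (Nat.le_succ s) hsn)
  have dist_eq : ∀ t ≤ n, ∀ w ∈ Metric.ball z ε, ‖compSeq t g y - w‖ = ‖y - w‖ := by
    intro t ht w hw
    refine le_antisymm (mono t ht w hw) ?_
    calc ‖y - w‖ = ‖compSeq n g y - w‖ := by rw [hy]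
      _ ≤ ‖compSeq t g y - w‖ := mono2 n t ht le_rfl w hw
  -- each step fixes the partial composition value
  have step : ∀ t < n, g t (compSeq t g y) = compSeq t g y := by
    intro t ht
    apply eq_of_dist_eq_ball (z := z) hε
    intro w hw
    calc ‖g t (compSeq t g y) - w‖ = ‖compSeq (t+1) g y - w‖ := rfl
      _ = ‖y - w‖ := dist_eq (t+1) ht w hw
      _ = ‖compSeq t g y - w‖ := (dist_eq t ht.le w hw).symm
  -- hence partial compositions all equal y
  have part : ∀ t ≤ n, compSeq t g y = y := by
    intro t ht
    induction t with
    | zero => rfl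
    | succ t ih =>
      rw [compSeq_succ_apply, ih (le_trans (Nat.le_succ t) ht),
        ← ih (le_trans (Nat.le_succ t) ht), step t ht, ih (le_trans (Nat.le_succ t) ht)]
  intro t ht
  have := step t ht
  rwa [part t ht.le] at this

lemma mem_of_refl_eq {C : Set H} {P : H → H} (hP : IsProjOn C P) {y : H}
    (hy : (2 : ℝ) • P y - y = y) : y ∈ C := by
  have h2 : (2 : ℝ) • P y = (2 : ℝ) • y := by
    have h := hy
    rw [sub_eq_iff_eq_add] at h
    rw [h, two_smul]
  have := smul_right_injective H (two_ne_zero (α := ℝ)) h2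
  rw [← this]
  exact (hP y).1

lemma fixQ_mem
    (m r : ℕ) (hr : 1 < r)
    (C : ℕ → Set H)
    (hC : ∀ i ∈ Set.Icc 1 m, (C i).Nonempty ∧ IsClosed (C i) ∧ Convex ℝ (C i))
    (z : H) (ε : ℝ) (hε : 0 < ε)
    (hball : Metric.ball z ε ⊆ ⋂ i ∈ Set.Icc 1 m, C i)
    (proj : ℕ → H → H) (hproj : ∀ i ∈ Set.Icc 1 m, IsProjOn (C i) (proj i))
    (f : ℕ → ℕ) (hf : Set.range f = Set.Icc 1 m)
    (jf : ℕ) (hjf : f '' Set.Icc 1 jf = Set.Icc 1 m)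
    {y : H} (hy : compSeq (jf + 1) (drS proj r f) y = y) :
    ∀ i ∈ Set.Icc 1 m, y ∈ C i := by
  have hfr : ∀ t : ℕ, f t ∈ Set.Icc 1 m := by
    intro t
    have : f t ∈ Set.range f := Set.mem_range_self t
    rwa [hf] at this
  have hballC : ∀ w ∈ Metric.ball z ε, ∀ i ∈ Set.Icc 1 m, w ∈ C i := by
    intro w hw i hi
    have := hball hw
    rw [Set.mem_iInter₂] at this
    exact this i hi
  -- reflections used in block n
  set gstep : ℕ → ℕ → H → H :=
    fun n j y => (2 : ℝ) • proj (f ((r - 1) * n + j)) y - y with hgstep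
  have hstep_ne : ∀ n j, Nonexpansive (gstep n j) := by
    intro n j
    exact refl_nonexpansive (hC _ (hfr _)).2.2 (hproj _ (hfr _))
  have hstep_fix : ∀ n j, ∀ w ∈ Metric.ball z ε, gstep n j w = w := by
    intro n j w hw
    exact refl_fix (hproj _ (hfr _)) (hballC w hw _ (hfr _))
  have hV_ne : ∀ n, Nonexpansive (compSeq r (gstep n)) :=
    fun n => compSeq_nonexpansive (fun t _ => hstep_ne n t)
  have hV_fix : ∀ n, ∀ w ∈ Metric.ball z ε, compSeq r (gstep n) w = w :=
    fun n w hw => compSeq_fix (fun t _ => hstep_fix n t w hw)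
  have hdrS_eq : ∀ n x, drS proj r f n x = (2⁻¹ : ℝ) • (x + compSeq r (gstep n) x) := by
    intro n x; rfl
  have hS_ne : ∀ n, Nonexpansive (drS proj r f n) := by
    intro n a b
    rw [hdrS_eq, hdrS_eq, ← smul_sub]
    have he : (a + compSeq r (gstep n) a) - (b + compSeq r (gstep n) b)
        = (a - b) + (compSeq r (gstep n) a - compSeq r (gstep n) b) := by abel
    rw [he, norm_smul]
    have h1 : ‖(a - b) + (compSeq r (gstep n) a - compSeq r (gstep n) b)‖
        ≤ ‖a - b‖ + ‖a - b‖ :=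
      le_trans (norm_add_le _ _) (by linarith [hV_ne n a b])
    have : ‖(2⁻¹ : ℝ)‖ = 2⁻¹ := by norm_num
    rw [this]
    linarith
  have hS_fix : ∀ n, ∀ w ∈ Metric.ball z ε, drS proj r f n w = w := by
    intro n w hw
    rw [hdrS_eq, hV_fix n w hw]
    rw [← two_smul ℝ w, smul_smul]
    norm_num
  -- level 1 peel
  have hlevel1 : ∀ n < jf + 1, drS proj r f n y = y :=
    peel hε (drS proj r f) (jf + 1) (fun t _ => hS_ne t) (fun t _ => hS_fix t) hy
  -- level 2
  have hmem : ∀ n ≤ jf, ∀ j < r, y ∈ C (f ((r - 1) * n + j)) := by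
    intro n hn j hj
    have hSy := hlevel1 n (Nat.lt_succ_of_le hn)
    rw [hdrS_eq] at hSy
    have hVy : compSeq r (gstep n) y = y := by
      have h2 : y + compSeq r (gstep n) y = (2 : ℝ) • y := by
        have := congrArg (fun u => (2 : ℝ) • u) hSy
        simp only [smul_smul] at this
        norm_num at this
        rw [this, two_smul]
      have : compSeq r (gstep n) y = (2 : ℝ) • y - y := by rw [← h2]; abel
      rw [this, two_smul]; abel
    have := peel hε (gstep n) r (fun t _ => hstep_ne n t) (fun t _ => hstep_fix n t) hVy j hj
    exact mem_of_refl_eq (hproj _ (hfr _)) this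
  -- cover all i
  intro i hi
  have : i ∈ f '' Set.Icc 1 jf := by rw [hjf]; exact hi
  obtain ⟨t, ht, hft⟩ := this
  have hr1 : 0 < r - 1 := by omega
  have hdecomp : (r - 1) * (t / (r - 1)) + t % (r - 1) = t := Nat.div_add_mod t (r - 1)
  have hn : t / (r - 1) ≤ jf := le_trans (Nat.div_le_self t (r - 1)) ht.2
  have hjlt : t % (r - 1) < r := lt_of_lt_of_le (Nat.mod_lt t hr1) (Nat.sub_le r 1)
  have := hmem (t / (r - 1)) hn (t % (r - 1)) hjlt
  rw [hdecomp, hft] at this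
  exact this

lemma exists_weak_cluster (u : ℕ → H) (c : ℝ) (hb : ∀ n, ‖u n‖ ≤ c) :
    ∃ φ : ℕ → ℕ, StrictMono φ ∧ ∃ p : H, ∀ y : H,
      Tendsto (fun l => ⟪u (φ l), y⟫) atTop (𝓝 ⟪p, y⟫) := by
  have hc0 : 0 ≤ c := le_trans (norm_nonneg (u 0)) (hb 0)
  -- diagonal extraction via compactness of a product of intervals
  set g : ℕ → ℕ → ℝ := fun n m => ⟪u n, u m⟫ with hgdef
  have hgmem : ∀ n, g n ∈ Set.pi Set.univ (fun _ : ℕ => Set.Icc (-(c * c)) (c * c)) := by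
    intro n
    rw [Set.mem_univ_pi]
    intro m
    have h1 : |⟪u n, u m⟫| ≤ c * c := by
      calc |⟪u n, u m⟫| ≤ ‖u n‖ * ‖u m‖ := abs_real_inner_le_norm _ _
        _ ≤ c * c := mul_le_mul (hb n) (hb m) (norm_nonneg _) hc0
    exact abs_le.mp h1
  obtain ⟨a, -, φ, hφ, hconv⟩ :=
    (isCompact_univ_pi fun _ : ℕ => isCompact_Icc).tendsto_subseq hgmem
  rw [tendsto_pi_nhds] at hconv
  have hpt : ∀ m, Tendsto (fun l => ⟪u (φ l), u m⟫) atTop (𝓝 (a m)) := fun m => hconv m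
  -- the closed span of the orbit
  set K : Submodule ℝ H := (Submodule.span ℝ (Set.range u)).topologicalClosure with hK
  have hKclosed : IsClosed (K : Set H) := Submodule.isClosed_topologicalClosure _
  haveI : CompleteSpace K := hKclosed.completeSpace_coe
  have huK : ∀ n, u n ∈ K :=
    fun n => Submodule.le_topologicalClosure _ (Submodule.subset_span (Set.mem_range_self n))
  -- limits exist for every y
  have exL : ∀ y : H, ∃ L : ℝ, Tendsto (fun l => ⟪u (φ l), y⟫) atTop (𝓝 L) := by
    have hspan : ∀ s ∈ Submodule.span ℝ (Set.range u),
        ∃ L : ℝ, Tendsto (fun l => ⟪u (φ l), s⟫) atTop (𝓝 L) := by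
      intro s hs
      induction hs using Submodule.span_induction with
      | mem s hs =>
        obtain ⟨m, rfl⟩ := hs
        exact ⟨a m, hpt m⟩
      | zero => exact ⟨0, by simp⟩
      | add s t _ _ ihs iht =>
        obtain ⟨L1, h1⟩ := ihs
        obtain ⟨L2, h2⟩ := iht
        exact ⟨L1 + L2, by simpa [inner_add_right] using h1.add h2⟩
      | smul r s _ ihs =>
        obtain ⟨L, h1⟩ := ihs
        exact ⟨r * L, by simpa [real_inner_smul_right] using h1.const_mul r⟩
    have hclo : ∀ y ∈ K, ∃ L : ℝ, Tendsto (fun l => ⟪u (φ l), y⟫) atTop (𝓝 L) := by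
      intro y hy
      have hcau : CauchySeq (fun l => ⟪u (φ l), y⟫) := by
        rw [Metric.cauchySeq_iff]
        intro ε hε
        have hyc : y ∈ closure (Submodule.span ℝ (Set.range u) : Set H) := hy
        rw [Metric.mem_closure_iff] at hyc
        obtain ⟨s, hs, hds⟩ := hyc (ε / (4 * c + 4)) (by positivity)
        obtain ⟨L, hL⟩ := hspan s hs
        have hcs : CauchySeq (fun l => ⟪u (φ l), s⟫) := hL.cauchySeq
        rw [Metric.cauchySeq_iff] at hcs
        obtain ⟨N, hN⟩ := hcs (ε / 2) (by positivity)
        refine ⟨N, fun k hk l hl => ?_⟩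
        have key : ∀ j : ℕ, |⟪u (φ j), y⟫ - ⟪u (φ j), s⟫| ≤ c * (ε / (4 * c + 4)) := by
          intro j
          rw [← inner_sub_right]
          calc |⟪u (φ j), y - s⟫| ≤ ‖u (φ j)‖ * ‖y - s‖ := abs_real_inner_le_norm _ _
            _ ≤ c * (ε / (4 * c + 4)) := by
              apply mul_le_mul (hb _) ?_ (norm_nonneg _) hc0
              rw [← dist_eq_norm]
              exact hds.le
        have h4 : (0 : ℝ) < 4 * c + 4 := by linarith
        have h5 : ε / (4 * c + 4) * (4 * c + 4) = ε := div_mul_cancel₀ _ (ne_of_gt h4)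
        have hcc : c * (ε / (4 * c + 4)) < ε / 4 := by
          nlinarith [div_pos hε h4]
        have h1 := hN k hk l hl
        rw [Real.dist_eq] at h1 ⊢
        have habc : ⟪u (φ k), y⟫ - ⟪u (φ l), y⟫ =
            (⟪u (φ k), y⟫ - ⟪u (φ k), s⟫) + (⟪u (φ k), s⟫ - ⟪u (φ l), s⟫)
              + (⟪u (φ l), s⟫ - ⟪u (φ l), y⟫) := by ring
        have htri : |⟪u (φ k), y⟫ - ⟪u (φ l), y⟫|
            ≤ |⟪u (φ k), y⟫ - ⟪u (φ k), s⟫| + |⟪u (φ k), s⟫ - ⟪u (φ l), s⟫|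
              + |⟪u (φ l), s⟫ - ⟪u (φ l), y⟫| := by
          rw [habc]; exact abs_add_three _ _ _
        have k2 := key l
        rw [abs_sub_comm] at k2
        linarith [key k, k2, h1, hcc]
      exact cauchySeq_tendsto_of_complete hcau
    intro y
    obtain ⟨L, hL⟩ := hclo _ (Submodule.coe_mem (K.orthogonalProjectionOnto y))
    refine ⟨L, ?_⟩
    have horth : ∀ l, ⟪u (φ l), y⟫ = ⟪u (φ l), ((K.orthogonalProjectionOnto y : K) : H)⟫ := by
      intro l
      have hmem : y - K.orthogonalProjectionOnto y ∈ Kᗮ := K.sub_starProjection_mem_orthogonal y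
      have h0 : ⟪u (φ l), y - K.orthogonalProjectionOnto y⟫ = 0 :=
        (Submodule.mem_orthogonal K _).mp hmem (u (φ l)) (huK _)
      rw [inner_sub_right] at h0
      linarith
    simpa only [horth] using hL
  choose F hF using exL
  have hadd : ∀ y₁ y₂, F (y₁ + y₂) = F y₁ + F y₂ := by
    intro y₁ y₂
    refine tendsto_nhds_unique (hF (y₁ + y₂)) ?_
    simpa only [inner_add_right] using (hF y₁).add (hF y₂)
  have hsmul : ∀ (r : ℝ) (y : H), F (r • y) = r * F y := by
    intro r y
    refine tendsto_nhds_unique (hF (r • y)) ?_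
    simpa only [real_inner_smul_right] using (hF y).const_mul r
  have hbound : ∀ y, ‖F y‖ ≤ c * ‖y‖ := by
    intro y
    have h1 : ∀ l, |⟪u (φ l), y⟫| ≤ c * ‖y‖ := by
      intro l
      calc |⟪u (φ l), y⟫| ≤ ‖u (φ l)‖ * ‖y‖ := abs_real_inner_le_norm _ _
        _ ≤ c * ‖y‖ := mul_le_mul_of_nonneg_right (hb _) (norm_nonneg _)
    have := le_of_tendsto (hF y).abs (Eventually.of_forall h1)
    rwa [Real.norm_eq_abs]
  let Flin : H →ₗ[ℝ] ℝ :=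
    { toFun := F, map_add' := hadd, map_smul' := hsmul }
  let Fclm : H →L[ℝ] ℝ := Flin.mkContinuous c hbound
  refine ⟨φ, hφ, (InnerProductSpace.toDual ℝ H).symm Fclm, fun y => ?_⟩
  rw [InnerProductSpace.toDual_symm_apply]
  exact hF y

lemma demiclosed {T : H → H} (hT : Nonexpansive T) (v : ℕ → H) (p : H) (c : ℝ)
    (hb : ∀ l, ‖v l‖ ≤ c)
    (hw : ∀ y, Tendsto (fun l => ⟪v l, y⟫) atTop (𝓝 ⟪p, y⟫))
    (hreg : Tendsto (fun l => v l - T (v l)) atTop (𝓝 0)) : T p = p := by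
  set e : ℕ → ℝ := fun l => ‖v l - T (v l)‖ with hedef
  have he : Tendsto e atTop (𝓝 0) := by
    rw [hedef]
    exact (tendsto_zero_iff_norm_tendsto_zero).mp hreg
  have hkey : ∀ l, ‖p - T p‖ ^ 2 ≤
      e l ^ 2 + 2 * e l * (c + ‖p‖) - 2 * (⟪v l, p - T p⟫ - ⟪p, p - T p⟫) := by
    intro l
    have hexp : ‖v l - T p‖ ^ 2 =
        ‖v l - p‖ ^ 2 + 2 * ⟪v l - p, p - T p⟫ + ‖p - T p‖ ^ 2 := by
      have : v l - T p = (v l - p) + (p - T p) := by abel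
      rw [this, norm_add_sq_real]
    have htri : ‖v l - T p‖ ≤ e l + ‖v l - p‖ := by
      calc ‖v l - T p‖ ≤ ‖v l - T (v l)‖ + ‖T (v l) - T p‖ := by
            have : v l - T p = (v l - T (v l)) + (T (v l) - T p) := by abel
            rw [this]; exact norm_add_le _ _
        _ ≤ e l + ‖v l - p‖ := by
            have := hT (v l) p
            simp only [hedef]
            linarith
    have hsq : ‖v l - T p‖ ^ 2 ≤ (e l + ‖v l - p‖) ^ 2 :=
      pow_le_pow_left₀ (norm_nonneg _) htri 2
    have hvp : ‖v l - p‖ ≤ c + ‖p‖ :=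
      le_trans (norm_sub_le _ _) (by linarith [hb l])
    have hinner : ⟪v l - p, p - T p⟫ = ⟪v l, p - T p⟫ - ⟪p, p - T p⟫ := by
      rw [inner_sub_left]
    have he0 : 0 ≤ e l := norm_nonneg _
    nlinarith [hsq, hexp, hvp, hinner, norm_nonneg (v l - p)]
  have hlim : Tendsto (fun l =>
      e l ^ 2 + 2 * e l * (c + ‖p‖) - 2 * (⟪v l, p - T p⟫ - ⟪p, p - T p⟫)) atTop (𝓝 0) := by
    have h1 : Tendsto (fun l => e l ^ 2) atTop (𝓝 0) := by
      have := he.mul he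
      simpa [pow_two] using this
    have h2 : Tendsto (fun l => 2 * e l * (c + ‖p‖)) atTop (𝓝 0) := by
      have := (he.const_mul 2).mul_const (c + ‖p‖)
      simpa [mul_assoc] using this
    have h3 : Tendsto (fun l => ⟪v l, p - T p⟫ - ⟪p, p - T p⟫) atTop (𝓝 0) := by
      have := (hw (p - T p)).sub_const ⟪p, p - T p⟫
      simpa using this
    have := (h1.add h2).sub (h3.const_mul 2)
    simpa [mul_comm] using this
  have hle : ‖p - T p‖ ^ 2 ≤ 0 := ge_of_tendsto hlim (Eventually.of_forall hkey)
  have : ‖p - T p‖ = 0 := by nlinarith [norm_nonneg (p - T p)]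
  rw [norm_eq_zero, sub_eq_zero] at this
  exact this.symm

end Stmt5Aux

/-- Theorem 3.3(ii): unrestricted products of strongly nonexpansive operators
containing the composite unrestricted DR operator `Q`. -/
theorem stmt5
    (m r M k : ℕ) (hr : 1 < r) (hM : 0 < M)
    (C : ℕ → Set H)
    (hC : ∀ i ∈ Set.Icc 1 m, (C i).Nonempty ∧ IsClosed (C i) ∧ Convex ℝ (C i))
    (hint : (interior (⋂ i ∈ Set.Icc 1 m, C i)).Nonempty)
    (proj : ℕ → H → H) (hproj : ∀ i ∈ Set.Icc 1 m, IsProjOn (C i) (proj i))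
    (f : ℕ → ℕ) (hf : Set.range f = Set.Icc 1 m)
    (jf : ℕ) (hjf : f '' Set.Icc 1 jf = Set.Icc 1 m)
    (T : ℕ → H → H) (hT : ∀ j ∈ Set.Icc 1 k, StronglyNonexpansive (T j))
    (hcommon : ∃ z : H, ∀ j ∈ Set.Icc 1 k, T j z = z)
    (h : ℕ → ℕ) (hh : Set.range h = Set.Icc 1 k)
    (hqp : ∀ n : ℕ, h '' Set.Ico n (n + M) = Set.range h)
    (hQ : ∃ j ∈ Set.Icc 1 k, compSeq (jf + 1) (drS proj r f) = T j)
    (x : H) :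
    ∃ p ∈ ⋂ i ∈ Set.Icc 1 m, C i,
      WeakConvergesTo (fun n => compSeq (n + 1) (fun i => T (h i)) x) p := by
  classical
  set u : ℕ → H := fun n => compSeq n (fun i => T (h i)) x with hudef
  have hu_succ : ∀ n, u (n + 1) = T (h n) (u n) := fun n => rfl
  obtain ⟨z, hz⟩ := hcommon
  have hhk : ∀ n, h n ∈ Set.Icc 1 k := by
    intro n
    have : h n ∈ Set.range h := Set.mem_range_self n
    rwa [hh] at this
  have hTn : ∀ n, Nonexpansive (T (h n)) := fun n => (hT _ (hhk n)).1
  have hzfix : ∀ n, T (h n) z = z := fun n => hz _ (hhk n)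
  -- Fejér monotonicity with respect to any common fixed point
  have hfej_gen : ∀ w : H, (∀ j ∈ Set.Icc 1 k, T j w = w) →
      Antitone fun n => ‖u n - w‖ := by
    intro w hw
    apply antitone_nat_of_succ_le
    intro n
    rw [hu_succ]
    calc ‖T (h n) (u n) - w‖ = ‖T (h n) (u n) - T (h n) w‖ := by rw [hw _ (hhk n)]
      _ ≤ ‖u n - w‖ := hTn n _ _
  have hlim_gen : ∀ w : H, (∀ j ∈ Set.Icc 1 k, T j w = w) →
      ∃ Lw : ℝ, Tendsto (fun n => ‖u n - w‖) atTop (𝓝 Lw) := by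
    intro w hw
    rcases tendsto_of_antitone (hfej_gen w hw) with hbot | hl
    · exfalso
      obtain ⟨n, hn⟩ := (hbot.eventually (eventually_lt_atBot (0 : ℝ))).exists
      exact absurd hn (not_lt.mpr (norm_nonneg _))
    · exact hl
  have hfej := hfej_gen z hz
  set c0 : ℝ := ‖u 0 - z‖ with hc0def
  have hbz : ∀ n, ‖u n - z‖ ≤ c0 := fun n => hfej (Nat.zero_le n)
  set c : ℝ := c0 + ‖z‖ with hcdef
  have hb : ∀ n, ‖u n‖ ≤ c := by
    intro n
    calc ‖u n‖ = ‖(u n - z) + z‖ := by rw [sub_add_cancel]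
      _ ≤ ‖u n - z‖ + ‖z‖ := norm_add_le _ _
      _ ≤ c := by rw [hcdef]; linarith [hbz n]
  obtain ⟨L, hL⟩ := hlim_gen z hz
  have hddiff : Tendsto (fun n => ‖u n - z‖ - ‖u (n + 1) - z‖) atTop (𝓝 0) := by
    have h2 : Tendsto (fun n => ‖u (n + 1) - z‖) atTop (𝓝 L) :=
      hL.comp (tendsto_add_atTop_nat 1)
    simpa using hL.sub h2
  have hdnonneg : ∀ n, 0 ≤ ‖u n - z‖ - ‖u (n + 1) - z‖ := by
    intro n
    have := hfej (Nat.le_succ n)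
    linarith
  -- asymptotic regularity
  have hdelta : Tendsto (fun n => u n - u (n + 1)) atTop (𝓝 (0 : H)) := by
    have hterm : ∀ j ∈ Finset.Icc 1 k,
        Tendsto (fun n => if h n = j then u n - u (n + 1) else (0 : H)) atTop (𝓝 0) := by
      intro j hjF
      have hjS : j ∈ Set.Icc 1 k := Set.mem_Icc.mpr (Finset.mem_Icc.mp hjF)
      set xj : ℕ → H := fun n => if h n = j then u n else z with hxjdef
      have hbd : ∃ cc, ∀ n, ‖xj n - (fun _ : ℕ => z) n‖ ≤ cc := by
        refine ⟨c0, fun n => ?_⟩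
        by_cases hc : h n = j
        · have hxj : xj n = u n := by rw [hxjdef]; simp [hc]
          simpa [hxj] using hbz n
        · have hxj : xj n = z := by rw [hxjdef]; simp [hc]
          simp only [hxj, sub_self, norm_zero]
          rw [hc0def]
          exact norm_nonneg _
      have hTjz : T j z = z := hz j hjS
      have hqt : Tendsto (fun n => ‖xj n - (fun _ : ℕ => z) n‖ -
          ‖T j (xj n) - T j ((fun _ : ℕ => z) n)‖) atTop (𝓝 0) := by
        apply tendsto_of_tendsto_of_tendsto_of_le_of_le tendsto_const_nhds hddiff
        · intro n
          have := (hT j hjS).1 (xj n) z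
          simp only
          linarith
        · intro n
          by_cases hc : h n = j
          · have hxj : xj n = u n := by rw [hxjdef]; simp [hc]
            have hTu : T j (u n) = u (n + 1) := by rw [← hc]; exact (hu_succ n).symm
            simp only [hxj, hTu, hTjz]
            exact le_rfl
          · have hxj : xj n = z := by rw [hxjdef]; simp [hc]
            simp only [hxj, hTjz]
            simp [hdnonneg n]
      have hcond := (hT j hjS).2 xj (fun _ => z) hbd hqt
      have hident : (fun n => xj n - (fun _ : ℕ => z) n - (T j (xj n) - T j ((fun _ : ℕ => z) n)))
          = fun n => if h n = j then u n - u (n + 1) else (0 : H) := by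
        funext n
        by_cases hc : h n = j
        · have hxj : xj n = u n := by rw [hxjdef]; simp [hc]
          have hTu : T j (u n) = u (n + 1) := by rw [← hc]; exact (hu_succ n).symm
          simp only [hxj, hTu, hTjz, if_pos hc]
          abel
        · have hxj : xj n = z := by rw [hxjdef]; simp [hc]
          simp only [hxj, hTjz, if_neg hc]
          abel
      rwa [hident] at hcond
    have hsum := tendsto_finset_sum (Finset.Icc 1 k) hterm
    have hident2 : (fun n => ∑ j ∈ Finset.Icc 1 k,
        (if h n = j then u n - u (n + 1) else (0 : H))) = fun n => u n - u (n + 1) := by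
      funext n
      rw [Finset.sum_ite_eq (Finset.Icc 1 k) (h n) (fun _ => u n - u (n + 1))]
      rw [if_pos (Finset.mem_Icc.mpr (Set.mem_Icc.mp (hhk n)))]
    rw [hident2] at hsum
    simpa using hsum
  -- shifted asymptotic regularity
  have hshift : ∀ t : ℕ, Tendsto (fun n => u n - u (n + t)) atTop (𝓝 (0 : H)) := by
    intro t
    induction t with
    | zero => simpa using tendsto_const_nhds
    | succ t ih =>
      have h2 : Tendsto (fun n => u (n + t) - u (n + t + 1)) atTop (𝓝 (0 : H)) :=
        hdelta.comp (tendsto_add_atTop_nat t)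
      have h3 := ih.add h2
      have hident : (fun n => (u n - u (n + t)) + (u (n + t) - u (n + t + 1)))
          = fun n => u n - u (n + (t + 1)) := by
        funext n
        have : n + (t + 1) = n + t + 1 := by omega
        rw [this]
        abel
      rw [hident] at h3
      simpa using h3
  -- main subsequence extraction
  have main : ∀ ψ : ℕ → ℕ, Tendsto ψ atTop atTop →
      ∃ ms : ℕ → ℕ, Tendsto ms atTop atTop ∧ ∃ q : H,
        (∀ j ∈ Set.Icc 1 k, T j q = q) ∧
        ∀ y, Tendsto (fun l => ⟪u (ψ (ms l)), y⟫) atTop (𝓝 ⟪q, y⟫) := by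
    intro ψ hψ
    obtain ⟨φ, hφmono, q, hqw⟩ := exists_weak_cluster (fun l => u (ψ l)) c (fun l => hb _)
    refine ⟨φ, hφmono.tendsto_atTop, q, ?_, hqw⟩
    intro j hj
    have hψφ : Tendsto (fun l => ψ (φ l)) atTop atTop := hψ.comp hφmono.tendsto_atTop
    have hchoice : ∀ l : ℕ, ∃ s, s ∈ Set.Ico (ψ (φ l)) (ψ (φ l) + M) ∧ h s = j := by
      intro l
      have : j ∈ h '' Set.Ico (ψ (φ l)) (ψ (φ l) + M) := by
        rw [hqp, hh]; exact hj
      obtain ⟨s, hs1, hs2⟩ := this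
      exact ⟨s, hs1, hs2⟩
    choose s hs1 hs2 using hchoice
    have hstend : Tendsto s atTop atTop :=
      tendsto_atTop_mono (fun l => (hs1 l).1) hψφ
    have hdiff : Tendsto (fun l => u (s l) - u (ψ (φ l))) atTop (𝓝 (0 : H)) := by
      rw [NormedAddCommGroup.tendsto_nhds_zero]
      intro ε hε
      have hev : ∀ᶠ n in atTop, ∀ t ∈ Finset.range M, ‖u n - u (n + t)‖ < ε := by
        rw [eventually_all_finset]
        intro t _
        exact ((tendsto_zero_iff_norm_tendsto_zero.mp (hshift t)).eventually_lt_const hε)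
      rw [eventually_atTop] at hev
      obtain ⟨N, hN⟩ := hev
      filter_upwards [hψφ.eventually_ge_atTop N] with l hl
      have h1 := (hs1 l).1
      have h2 := (hs1 l).2
      have ht : s l - ψ (φ l) < M := by omega
      have hteq : s l = ψ (φ l) + (s l - ψ (φ l)) := by omega
      calc ‖u (s l) - u (ψ (φ l))‖
          = ‖u (ψ (φ l)) - u (ψ (φ l) + (s l - ψ (φ l)))‖ := by
            rw [norm_sub_rev]; rw [← hteq]
        _ < ε := hN (ψ (φ l)) hl _ (Finset.mem_range.mpr ht)
    have hweak_v : ∀ y, Tendsto (fun l => ⟪u (s l), y⟫) atTop (𝓝 ⟪q, y⟫) := by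
      intro y
      have h2 : Tendsto (fun l => ⟪u (s l) - u (ψ (φ l)), y⟫) atTop (𝓝 (0 : ℝ)) := by
        have := Filter.Tendsto.inner (𝕜 := ℝ) hdiff (tendsto_const_nhds (x := y))
        simpa using this
      have h3 := (hqw y).add h2
      have hident : (fun l => ⟪u (ψ (φ l)), y⟫ + ⟪u (s l) - u (ψ (φ l)), y⟫)
          = fun l => ⟪u (s l), y⟫ := by
        funext l
        rw [inner_sub_left]
        ring
      rw [hident] at h3
      simpa using h3
    have hregv : Tendsto (fun l => u (s l) - T j (u (s l))) atTop (𝓝 (0 : H)) := by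
      have hident : (fun l => u (s l) - T j (u (s l))) = fun l => u (s l) - u (s l + 1) := by
        funext l
        rw [hu_succ, hs2 l]
      rw [hident]
      exact hdelta.comp hstend
    exact demiclosed (hT j hj).1 _ q c (fun l => hb _) hweak_v hregv
  -- obtain the weak limit p along a first subsequence
  obtain ⟨ms0, hms0, p, hpfix, hpw⟩ := main id tendsto_id
  -- p lies in the intersection
  obtain ⟨j0, hj0, hQeq⟩ := hQ
  have hQp : compSeq (jf + 1) (drS proj r f) p = p := by
    rw [hQeq]; exact hpfix j0 hj0
  obtain ⟨z0, hz0⟩ := hint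
  obtain ⟨ε0, hε0, hball⟩ := Metric.mem_nhds_iff.mp (mem_interior_iff_mem_nhds.mp hz0)
  have hpC := fixQ_mem m r hr C hC z0 ε0 hε0 hball proj hproj f hf jf hjf hQp
  -- full weak convergence to p
  have hfull : ∀ y, Tendsto (fun n => ⟪u n, y⟫) atTop (𝓝 ⟪p, y⟫) := by
    intro y
    apply tendsto_of_subseq_tendsto
    intro ns hns
    obtain ⟨ms, hmst, q, hqfix, hqw⟩ := main ns hns
    have hq_eq : q = p := by
      obtain ⟨Lp, hLp⟩ := hlim_gen p hpfix
      obtain ⟨Lq, hLq⟩ := hlim_gen q hqfix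
      have hip : Tendsto (fun n => ‖u n - p‖ ^ 2 - ‖u n - q‖ ^ 2) atTop
          (𝓝 (Lp ^ 2 - Lq ^ 2)) := by
        have h1 : Tendsto (fun n => ‖u n - p‖ ^ 2) atTop (𝓝 (Lp ^ 2)) := by
          have := hLp.mul hLp; simpa [pow_two] using this
        have h2 : Tendsto (fun n => ‖u n - q‖ ^ 2) atTop (𝓝 (Lq ^ 2)) := by
          have := hLq.mul hLq; simpa [pow_two] using this
        exact h1.sub h2
      have hexp : ∀ n, ‖u n - p‖ ^ 2 - ‖u n - q‖ ^ 2
          = ‖p‖ ^ 2 - ‖q‖ ^ 2 - 2 * ⟪u n, p - q⟫ := by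
        intro n
        rw [norm_sub_sq_real, norm_sub_sq_real, inner_sub_right]
        ring
      have hα : Tendsto (fun n => ⟪u n, p - q⟫) atTop
          (𝓝 ((‖p‖ ^ 2 - ‖q‖ ^ 2 - (Lp ^ 2 - Lq ^ 2)) / 2)) := by
        have h4 : Tendsto (fun n => (‖p‖ ^ 2 - ‖q‖ ^ 2 - (‖u n - p‖ ^ 2 - ‖u n - q‖ ^ 2)) / 2)
            atTop (𝓝 ((‖p‖ ^ 2 - ‖q‖ ^ 2 - (Lp ^ 2 - Lq ^ 2)) / 2)) :=
          ((tendsto_const_nhds.sub hip).div_const 2)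
        have hident : (fun n => (‖p‖ ^ 2 - ‖q‖ ^ 2 - (‖u n - p‖ ^ 2 - ‖u n - q‖ ^ 2)) / 2)
            = fun n => ⟪u n, p - q⟫ := by
          funext n; rw [hexp n]; ring
        rwa [hident] at h4
      -- evaluate along the two subsequences
      have e1 : Tendsto (fun l => ⟪u (ms0 l), p - q⟫) atTop
          (𝓝 ((‖p‖ ^ 2 - ‖q‖ ^ 2 - (Lp ^ 2 - Lq ^ 2)) / 2)) := hα.comp hms0
      have e1' : Tendsto (fun l => ⟪u (ms0 l), p - q⟫) atTop (𝓝 ⟪p, p - q⟫) := by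
        have := hpw (p - q); simpa using this
      have e2 : Tendsto (fun l => ⟪u (ns (ms l)), p - q⟫) atTop
          (𝓝 ((‖p‖ ^ 2 - ‖q‖ ^ 2 - (Lp ^ 2 - Lq ^ 2)) / 2)) := hα.comp (hns.comp hmst)
      have e2' : Tendsto (fun l => ⟪u (ns (ms l)), p - q⟫) atTop (𝓝 ⟪q, p - q⟫) :=
        hqw (p - q)
      have heq1 := tendsto_nhds_unique e1' e1
      have heq2 := tendsto_nhds_unique e2' e2
      have : ⟪p - q, p - q⟫ = 0 := by
        rw [inner_sub_left]
        linarith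
      rw [inner_self_eq_zero, sub_eq_zero] at this
      exact this.symm
    exact ⟨ms, by rw [← hq_eq]; exact hqw y⟩
  refine ⟨p, Set.mem_iInter₂.mpr hpC, fun y => ?_⟩
  have := (hfull y).comp (tendsto_add_atTop_nat 1)
  exact this
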